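/- Let A = (Q, δ, I, F) be an NFA over a finite alphabet Σ and V ⊆ Q. Then the words newly accepted by the self-loop reduction satisfy: L(selfloop(A, V)) ∖ L(A) ⊆ (⋃_{q∈V} B_A(q)·Σ*) ∖ (⋃_{q∈V} B_A(q)·L_A(q)). -/

import Mathlib

/-- The language of an NFA, as a set of words. -/
def lang {α σ : Type*} (A : NFA α σ) : Set (List α) :=
  {w | ∃ qf ∈ A.accept, qf ∈ A.eval w}

/-- The banguage of a state `q`: words over which some run from an initial
state of `A` ends in `q`. -/
def bang {α σ : Type*} (A : NFA α σ) (q : σ) : Set (List α) :=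
  {w | q ∈ A.eval w}

/-- The language of a state `q`: words over which some run from `q` ends in an
accepting state of `A`. -/
def langOf {α σ : Type*} (A : NFA α σ) (q : σ) : Set (List α) :=
  {w | ∃ qf ∈ A.accept, qf ∈ A.evalFrom {q} w}

/-- Concatenation of two languages. -/
def concatLang {α : Type*} (K L : Set (List α)) : Set (List α) :=
  {w | ∃ u ∈ K, ∃ v ∈ L, w = u ++ v}

open Classical in
/-- `selfloop A V` replaces, for every state `q ∈ V` and every symbol `a`, the
set of successors `δ(q, a)` by the self-loop `{q}`; transitions from states
outside `V`, as well as initial and accepting states, are unchanged. -/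
noncomputable def selfloop {α σ : Type*} (A : NFA α σ) (V : Set σ) : NFA α σ where
  step q a := if q ∈ V then {q} else A.step q a
  start := A.start
  accept := A.accept

theorem mem_evalFrom_iff' {α σ : Type*} (N : NFA α σ) :
    ∀ (w : List α) (S : Set σ) (p : σ),
      p ∈ N.evalFrom S w ↔ ∃ q ∈ S, p ∈ N.evalFrom {q} w := by
  intro w
  induction w with
  | nil => intro S p; simp [NFA.evalFrom]
  | cons a w ih =>
    intro S p
    have h1 : N.evalFrom S (a :: w) = N.evalFrom (N.stepSet S a) w := rfl
    rw [h1, ih]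
    constructor
    · rintro ⟨q', hq', hp⟩
      rcases (N.mem_stepSet : q' ∈ N.stepSet S a ↔ _).mp hq' with ⟨q, hq, hstep⟩
      refine ⟨q, hq, ?_⟩
      show p ∈ N.evalFrom (N.stepSet {q} a) w
      rw [ih]
      exact ⟨q', (N.mem_stepSet : q' ∈ N.stepSet {q} a ↔ _).mpr ⟨q, rfl, hstep⟩, hp⟩
    · rintro ⟨q, hq, hp⟩
      have h2 : p ∈ N.evalFrom (N.stepSet {q} a) w := hp
      rw [ih] at h2
      rcases h2 with ⟨q', hq', hp'⟩
      rcases (N.mem_stepSet : q' ∈ N.stepSet {q} a ↔ _).mp hq' with ⟨q'', hq'', hs⟩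
      cases hq''
      exact ⟨q', (N.mem_stepSet : q' ∈ N.stepSet S a ↔ _).mpr ⟨q, hq, hs⟩, hp'⟩

theorem stepSet_singleton' {α σ : Type*} (N : NFA α σ) (q : σ) (a : α) :
    N.stepSet {q} a = N.step q a := by
  simp [NFA.stepSet]

theorem selfloop_run {α σ : Type*} (A : NFA α σ) (V : Set σ) :
    ∀ (w : List α) (q p : σ), p ∈ (selfloop A V).evalFrom {q} w →
      p ∈ A.evalFrom {q} w ∨ ∃ r ∈ V, ∃ u v : List α, w = u ++ v ∧ r ∈ A.evalFrom {q} u := by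
  intro w
  induction w with
  | nil => intro q p h; exact Or.inl h
  | cons a w ih =>
    intro q p h
    have h1 : p ∈ (selfloop A V).evalFrom ((selfloop A V).stepSet {q} a) w := h
    rw [stepSet_singleton'] at h1
    by_cases hq : q ∈ V
    · exact Or.inr ⟨q, hq, [], a :: w, rfl, rfl⟩
    · have hstep : (selfloop A V).step q a = A.step q a := if_neg hq
      rw [hstep] at h1
      rw [mem_evalFrom_iff'] at h1
      rcases h1 with ⟨q', hq', hp⟩
      rcases ih q' p hp with h2 | ⟨r, hr, u, v, huv, hru⟩
      · left
        show p ∈ A.evalFrom (A.stepSet {q} a) w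
        rw [stepSet_singleton', mem_evalFrom_iff']
        exact ⟨q', hq', h2⟩
      · right
        refine ⟨r, hr, a :: u, v, by rw [huv, List.cons_append], ?_⟩
        show r ∈ A.evalFrom (A.stepSet {q} a) u
        rw [stepSet_singleton', mem_evalFrom_iff']
        exact ⟨q', hq', hru⟩

theorem evalFrom_append' {α σ : Type*} (N : NFA α σ) (S : Set σ) (u v : List α) :
    N.evalFrom S (u ++ v) = N.evalFrom (N.evalFrom S u) v := by
  simp [NFA.evalFrom, List.foldl_append]

/-- The words newly accepted by the self-loop reduction satisfy
`L(selfloop(A, V)) ∖ L(A) ⊆ (⋃_{q∈V} B_A(q)·Σ*) ∖ (⋃_{q∈V} B_A(q)·L_A(q))`. -/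
theorem selfloop_diff_subset {α σ : Type*} [Fintype α] [Fintype σ]
    (A : NFA α σ) (V : Set σ) :
    lang (selfloop A V) \ lang A ⊆
      (⋃ q ∈ V, concatLang (bang A q) Set.univ) \
        (⋃ q ∈ V, concatLang (bang A q) (langOf A q)) := by
  rintro w ⟨hsl, hnA⟩
  constructor
  · rcases hsl with ⟨qf, hacc, hev⟩
    have hev' : qf ∈ (selfloop A V).evalFrom A.start w := hev
    rw [mem_evalFrom_iff'] at hev'
    rcases hev' with ⟨q0, hq0, hrun⟩
    rcases selfloop_run A V w q0 qf hrun with h | ⟨r, hr, u, v, huv, hru⟩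
    · exfalso
      apply hnA
      exact ⟨qf, hacc, (mem_evalFrom_iff' A w A.start qf).mpr ⟨q0, hq0, h⟩⟩
    · apply Set.mem_biUnion hr
      refine ⟨u, ?_, v, Set.mem_univ v, huv⟩
      exact (mem_evalFrom_iff' A u A.start r).mpr ⟨q0, hq0, hru⟩
  · intro hmem
    apply hnA
    rw [Set.mem_iUnion₂] at hmem
    rcases hmem with ⟨q, hqV, u, hu, v, hv, huv⟩
    rcases hv with ⟨qf, hacc, hqf⟩
    refine ⟨qf, hacc, ?_⟩
    show qf ∈ A.evalFrom A.start w
    rw [huv, evalFrom_append', mem_evalFrom_iff']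
    exact ⟨q, hu, hqf⟩
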